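/- arXiv:1804.04532 — 2 statements merged into one kernel-verified Lean document; each statement's English description precedes it below -/
import Mathlib

section
/- For τ ≥ 1, the indicator that the strongest transmitter has SINR exceeding τ equals the sum over all transmitters of the indicators of their SINR exceeding τ. Precisely: let (ℓ_i)_{i ∈ F} be a finite nonempty family of nonnegative reals, σ² ≥ 0, τ ≥ 1, and let i₀ ∈ F be any index with ℓ_{i₀} = max_{i ∈ F} ℓ_i. Then the indicator 1{ℓ_{i₀} > τ((∑_{j ≠ i₀} ℓ_j) + σ²)} equals ∑_{i ∈ F} 1{ℓ_i > τ((∑_{j ≠ i} ℓ_j) + σ²)}. -/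
/-- For `τ ≥ 1`, the indicator that the strongest transmitter has SINR exceeding `τ`
equals the sum over all transmitters of the indicators of their SINR exceeding `τ`. -/
theorem indicator_max_SINR_eq_sum_indicators
    {ι : Type*} [DecidableEq ι] (F : Finset ι) (hF : F.Nonempty)
    (ℓ : ι → ℝ) (σ2 τ : ℝ)
    (hℓ : ∀ i ∈ F, 0 ≤ ℓ i) (hσ2 : 0 ≤ σ2) (hτ : 1 ≤ τ)
    (i₀ : ι) (hi₀ : i₀ ∈ F) (hmax : ∀ i ∈ F, ℓ i ≤ ℓ i₀) :
    (if ℓ i₀ > τ * ((∑ j ∈ F.erase i₀, ℓ j) + σ2) then (1 : ℝ) else 0)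
      = ∑ i ∈ F, (if ℓ i > τ * ((∑ j ∈ F.erase i, ℓ j) + σ2) then (1 : ℝ) else 0) := by
  rw [Finset.sum_eq_single_of_mem i₀ hi₀]
  intro i hi hne
  rw [if_neg]
  intro h
  have hS : (0:ℝ) ≤ ∑ j ∈ F.erase i, ℓ j :=
    Finset.sum_nonneg fun j hj => hℓ j (Finset.mem_of_mem_erase hj)
  have h1 : ℓ i₀ ≤ ∑ j ∈ F.erase i, ℓ j :=
    Finset.single_le_sum (fun j hj => hℓ j (Finset.mem_of_mem_erase hj))
      (Finset.mem_erase.mpr ⟨fun e => hne e.symm, hi₀⟩)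
  have h2 : (∑ j ∈ F.erase i, ℓ j) + σ2 ≤ τ * ((∑ j ∈ F.erase i, ℓ j) + σ2) :=
    le_mul_of_one_le_left (by linarith) hτ
  have := hmax i hi
  linarith
end

section
/- Corollary 1: the SINR coverage of a corner user in a room of half-side a with transmitter density λ equals that of a center user in a room of half-side 2a with transmitter density λ/4. Precisely: fix a > 0, h > 0, β > 0, λ > 0, σ² ≥ 0, τ > 0. Then C(λ, a, h, σ², τ, (a,a)) = C(λ/4, 2a, h, σ², τ, (0,0)), where C(λ, a, h, σ², τ, y) is the coverage probability of the mixed-binomial Poisson model with parameters (λ, a, h) at receiver location y. -/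
open MeasureTheory ProbabilityTheory
open scoped ENNReal

noncomputable section

/-- The plane `ℝ²` with the Euclidean norm. -/
abbrev E2 := EuclideanSpace ℝ (Fin 2)

/-- The closed square of center `c` and half-side `a`. -/
def Sq (c : E2) (a : ℝ) : Set E2 := {x | ∀ i, |x i - c i| ≤ a}

/-- The path-loss between a transmitter at `x` (at height `h`) and a receiver at `y`. -/
def pl (h β : ℝ) (x y : E2) : ℝ := (‖x - y‖ ^ 2 + h ^ 2) ^ (-β)

/-- The SINR coverage probability of the mixed-binomial Poisson model with transmitter
density `lam`, room half-side `a` and height `h`, at a receiver located at `y`, with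
noise `σ2` and SINR threshold `τ`: the number of transmitters `N` is Poisson with mean
`4a²λ` and, given `N = n`, the transmitters are `n` i.i.d. points uniform on `S(0,a)`;
coverage holds when some transmitter `i` satisfies
`ℓ(X_i,y) > τ (∑_{j≠i} ℓ(X_j,y) + σ2)`. -/
def cov (β lam a h σ2 τ : ℝ) (y : E2) : ℝ≥0∞ :=
  ∑' n : ℕ,
    ENNReal.ofReal (Real.exp (-(4 * a ^ 2 * lam)) * (4 * a ^ 2 * lam) ^ n / n.factorial) *
      ((Measure.pi fun _ : Fin n => volume.restrict (Sq 0 a))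
          {x : Fin n → E2 | ∃ i,
            pl h β (x i) y > τ * ((∑ j, pl h β (x j) y) - pl h β (x i) y + σ2)}
        / (volume (Sq 0 a)) ^ n)

/-- The corner of the room `S(0,a)`, i.e. the point `(a, a)`. -/
def corner (a : ℝ) : E2 := (WithLp.equiv 2 (Fin 2 → ℝ)).symm ![a, a]

lemma my_pi_restrict_pi {ι α : Type*} [Fintype ι] [MeasurableSpace α]
    (μ : Measure α) [SigmaFinite μ] {s : Set α} (hs : MeasurableSet s) :
    Measure.pi (fun _ : ι => μ.restrict s)
      = (Measure.pi fun _ : ι => μ).restrict (Set.univ.pi fun _ => s) := by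
  refine Measure.pi_eq fun t ht => ?_
  rw [Measure.restrict_apply (MeasurableSet.univ_pi ht), ← Set.pi_inter_distrib,
    Measure.pi_pi]
  exact Finset.prod_congr rfl fun i _ => (Measure.restrict_apply (ht i)).symm

lemma my_pi_map_map {ι α : Type*} [Fintype ι] [MeasurableSpace α] {f : α → α}
    (hf : Measurable f) (μ ν : Measure α) [SigmaFinite μ] [SigmaFinite ν]
    (h : μ.map f = ν) :
    (Measure.pi fun _ : ι => μ).map (fun x i => f (x i)) = Measure.pi fun _ : ι => ν := by
  have hF : Measurable fun (x : ι → α) i => f (x i) :=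
    measurable_pi_lambda _ fun i => hf.comp (measurable_pi_apply i)
  refine (Measure.pi_eq fun t ht => ?_).symm
  rw [Measure.map_apply hF (MeasurableSet.univ_pi ht)]
  have hpre : (fun (x : ι → α) i => f (x i)) ⁻¹' Set.univ.pi t
      = Set.univ.pi fun i => f ⁻¹' t i := by
    ext x; simp [Set.mem_pi]
  rw [hpre, Measure.pi_pi]
  refine Finset.prod_congr rfl fun i _ => ?_
  rw [← h, Measure.map_apply hf (ht i)]

lemma my_pi_smul {ι α : Type*} [Fintype ι] [MeasurableSpace α]
    (μ : Measure α) [IsFiniteMeasure μ] (c : ℝ≥0∞) (hc : c ≠ ∞) :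
    Measure.pi (fun _ : ι => c • μ)
      = c ^ Fintype.card ι • Measure.pi fun _ : ι => μ := by
  haveI : IsFiniteMeasure (c • μ) := ⟨by
    rw [Measure.smul_apply, smul_eq_mul]
    exact ENNReal.mul_lt_top hc.lt_top (measure_lt_top μ _)⟩
  refine Measure.pi_eq fun t ht => ?_
  rw [Measure.smul_apply, smul_eq_mul, Measure.pi_pi]
  simp only [Measure.smul_apply, smul_eq_mul]
  rw [Finset.prod_mul_distrib, Finset.prod_const, Finset.card_univ]

lemma my_map1 (a : ℝ) (ha : 0 < a) :
    (volume.restrict (Set.Icc (-(2*a)) (2*a))).map (fun t : ℝ => a - |t|)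
      = (2 : ℝ≥0∞) • volume.restrict (Set.Icc (-a) a) := by
  have hmeas : Measurable fun t : ℝ => a - |t| :=
    (continuous_const.sub continuous_abs).measurable
  have hsplit : Set.Icc (-(2*a)) (2*a) = Set.Ico (-(2*a)) 0 ∪ Set.Icc 0 (2*a) :=
    (Set.Ico_union_Icc_eq_Icc (by linarith) (by linarith)).symm
  have hdisj : Disjoint (Set.Ico (-(2*a)) 0) (Set.Icc 0 (2*a)) :=
    Set.disjoint_left.mpr fun t ht ht' => absurd ht'.1 (not_le.mpr ht.2)
  rw [hsplit, Measure.restrict_union hdisj measurableSet_Icc, Measure.map_add _ _ hmeas]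
  have h1 : (volume.restrict (Set.Ico (-(2*a)) 0)).map (fun t : ℝ => a - |t|)
      = volume.restrict (Set.Ico (-a) a) := by
    have e1 : (volume.restrict (Set.Ico (-(2*a)) 0)).map (fun t : ℝ => a - |t|)
        = (volume.restrict (Set.Ico (-(2*a)) 0)).map (fun t : ℝ => t + a) := by
      apply Measure.map_congr
      filter_upwards [ae_restrict_mem measurableSet_Ico] with t ht
      rw [abs_of_neg ht.2]; ring
    have hpre : Set.Ico (-(2*a)) 0 = (fun t : ℝ => t + a) ⁻¹' Set.Ico (-a) a := by
      ext t
      simp only [Set.mem_Ico, Set.mem_preimage]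
      constructor <;> rintro ⟨h1', h2'⟩ <;> constructor <;> linarith
    rw [e1, hpre, ← Measure.restrict_map (measurable_add_const a) measurableSet_Ico,
      map_add_right_eq_self volume a]
  have h2 : (volume.restrict (Set.Icc 0 (2*a))).map (fun t : ℝ => a - |t|)
      = volume.restrict (Set.Icc (-a) a) := by
    have e2 : (volume.restrict (Set.Icc 0 (2*a))).map (fun t : ℝ => a - |t|)
        = (volume.restrict (Set.Icc 0 (2*a))).map (fun t : ℝ => a - t) := by
      apply Measure.map_congr
      filter_upwards [ae_restrict_mem measurableSet_Icc] with t ht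
      rw [abs_of_nonneg ht.1]
    have hpre : Set.Icc 0 (2*a) = (fun t : ℝ => a - t) ⁻¹' Set.Icc (-a) a := by
      ext t
      simp only [Set.mem_Icc, Set.mem_preimage]
      constructor <;> rintro ⟨h1', h2'⟩ <;> constructor <;> linarith
    rw [e2, hpre, ← Measure.restrict_map (Measure.measurePreserving_sub_left volume a).measurable
      measurableSet_Icc, (Measure.measurePreserving_sub_left volume a).map_eq]
  rw [h1, h2, Measure.restrict_congr_set Ico_ae_eq_Icc, two_smul]



def sqmap (a : ℝ) (x : E2) : E2 := (WithLp.equiv 2 (Fin 2 → ℝ)).symm (fun i => a - |x i|)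

lemma sqmap_apply (a : ℝ) (x : E2) (i : Fin 2) : sqmap a x i = a - |x i| := rfl

lemma corner_apply (a : ℝ) (i : Fin 2) : corner a i = a := by
  fin_cases i <;> rfl

lemma sqmap_measurable (a : ℝ) : Measurable (sqmap a) := by
  have hψ : Measurable fun (y : Fin 2 → ℝ) i => a - |y i| :=
    measurable_pi_lambda _ fun i =>
      (continuous_const.sub (continuous_apply i).abs).measurable
  exact (((MeasurableEquiv.toLp 2 (Fin 2 → ℝ)).symm).symm.measurable.comp hψ).comp
    ((MeasurableEquiv.toLp 2 (Fin 2 → ℝ)).symm).measurable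

lemma key_pl (a h β : ℝ) (u : E2) : pl h β (sqmap a u) (corner a) = pl h β u 0 := by
  unfold pl
  have : ‖sqmap a u - corner a‖ = ‖u - 0‖ := by
    rw [sub_zero, EuclideanSpace.norm_eq, EuclideanSpace.norm_eq]
    congr 1
    refine Finset.sum_congr rfl fun i _ => ?_
    have : (sqmap a u - corner a) i = -|u i| := by
      simp [sqmap_apply, corner_apply]
    rw [this]
    simp [sq_abs]
  rw [this]

lemma sq_eq_preimage (b : ℝ) :
    Sq 0 b = ((MeasurableEquiv.toLp 2 (Fin 2 → ℝ)).symm) ⁻¹'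
      (Set.univ.pi fun _ : Fin 2 => Set.Icc (-b) b) := by
  ext x
  simp only [Sq, Set.mem_setOf_eq, Set.mem_preimage, Set.mem_pi, Set.mem_univ,
    forall_true_left, Set.mem_Icc, abs_le, PiLp.zero_apply, sub_zero, true_implies,
    MeasurableEquiv.coe_toLp_symm]

lemma sq_measurableSet (b : ℝ) : MeasurableSet (Sq 0 b) := by
  rw [sq_eq_preimage]
  exact ((MeasurableEquiv.toLp 2 (Fin 2 → ℝ)).symm).measurable
    (MeasurableSet.univ_pi fun _ => measurableSet_Icc)

lemma volume_sq (b : ℝ) : volume (Sq 0 b) = ENNReal.ofReal (2*b) ^ 2 := by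
  rw [sq_eq_preimage]
  rw [(EuclideanSpace.volume_preserving_symm_measurableEquiv_toLp (Fin 2)).measure_preimage
    (MeasurableSet.univ_pi fun _ => measurableSet_Icc).nullMeasurableSet]
  rw [volume_pi_pi]
  simp [Real.volume_Icc]
  congr 1
  rw [← two_mul, ENNReal.ofReal_mul (by norm_num), ENNReal.ofReal_ofNat]

lemma restrict_sq (b : ℝ) :
    volume.restrict (Sq 0 b)
      = ((Measure.pi fun _ : Fin 2 => (volume : Measure ℝ)).restrict
          (Set.univ.pi fun _ => Set.Icc (-b) b)).map
        ((MeasurableEquiv.toLp 2 (Fin 2 → ℝ)).symm).symm := by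
  set e := (MeasurableEquiv.toLp 2 (Fin 2 → ℝ)).symm
  have hvol : (volume : Measure (Fin 2 → ℝ)).map e.symm = (volume : Measure E2) :=
    ((EuclideanSpace.volume_preserving_symm_measurableEquiv_toLp (Fin 2)).symm e).map_eq
  have hbox : MeasurableSet (Set.univ.pi fun _ : Fin 2 => Set.Icc (-b) b) :=
    MeasurableSet.univ_pi fun _ => measurableSet_Icc
  have : (volume : Measure (Fin 2 → ℝ)) = Measure.pi fun _ => (volume : Measure ℝ) := rfl
  rw [← this, ← hvol, Measure.restrict_map e.symm.measurable (sq_measurableSet b)]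
  congr 1
  apply Measure.restrict_congr_set
  apply Filter.EventuallyEq.of_eq
  rw [sq_eq_preimage]
  ext x
  simp
  exact Iff.rfl

lemma icc_finite (b : ℝ) : IsFiniteMeasure (volume.restrict (Set.Icc (-b) b)) :=
  ⟨by rw [Measure.restrict_apply_univ, Real.volume_Icc]; exact ENNReal.ofReal_lt_top⟩

lemma map_sqmap (a : ℝ) (ha : 0 < a) :
    (volume.restrict (Sq 0 (2*a))).map (sqmap a)
      = (4 : ℝ≥0∞) • volume.restrict (Sq 0 a) := by
  set e := (MeasurableEquiv.toLp 2 (Fin 2 → ℝ)).symm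
  haveI := icc_finite a
  haveI : IsFiniteMeasure ((2:ℝ≥0∞) • volume.restrict (Set.Icc (-a) a)) := ⟨by
    rw [Measure.smul_apply, smul_eq_mul]
    exact ENNReal.mul_lt_top (by norm_num) (measure_lt_top _ _)⟩
  rw [restrict_sq (2*a), restrict_sq a]
  rw [Measure.map_map (sqmap_measurable a) e.symm.measurable]
  have hcomp : sqmap a ∘ e.symm = e.symm ∘ (fun (y : Fin 2 → ℝ) i => a - |y i|) := rfl
  have hψ : Measurable fun (y : Fin 2 → ℝ) i => a - |y i| :=
    measurable_pi_lambda _ fun i =>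
      (continuous_const.sub (continuous_apply i).abs).measurable
  rw [hcomp, ← Measure.map_map e.symm.measurable hψ]
  rw [← my_pi_restrict_pi _ measurableSet_Icc, ← my_pi_restrict_pi _ measurableSet_Icc]
  rw [my_pi_map_map (f := fun t : ℝ => a - |t|) (continuous_const.sub continuous_abs).measurable _ _ (my_map1 a ha)]
  rw [my_pi_smul _ 2 (by norm_num), Measure.map_smul]
  congr 1
  simp [Fintype.card_fin]
  norm_num


/-- Corollary 1: the SINR coverage of a corner user in a room of half-side `a` with
transmitter density `λ` equals that of a center user in a room of half-side `2a`
with transmitter density `λ/4`. -/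
theorem corner_coverage_eq_center_coverage_quarter_density
    (a h β lam σ2 τ : ℝ) (ha : 0 < a) (hh : 0 < h) (hβ : 0 < β) (hlam : 0 < lam)
    (hσ2 : 0 ≤ σ2) (hτ : 0 < τ) :
    cov β lam a h σ2 τ (corner a) = cov β (lam / 4) (2 * a) h σ2 τ 0 := by
  have hcontpl : ∀ y : E2, Continuous fun u : E2 => pl h β u y := by
    intro y
    unfold pl
    exact (((continuous_id.sub continuous_const).norm.pow 2).add continuous_const).rpow_const
      (fun u => Or.inl (ne_of_gt (add_pos_of_nonneg_of_pos (sq_nonneg _) (pow_pos hh 2))))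
  have hfin : ∀ b : ℝ, IsFiniteMeasure (volume.restrict (Sq 0 b)) := by
    intro b
    refine ⟨?_⟩
    rw [Measure.restrict_apply_univ, volume_sq]
    exact ENNReal.pow_lt_top ENNReal.ofReal_lt_top
  have hV : volume (Sq 0 (2*a)) = 4 * volume (Sq 0 a) := by
    rw [volume_sq, volume_sq,
      show (2:ℝ)*(2*a) = 2*(2*a) by ring,
      ENNReal.ofReal_mul (by norm_num : (0:ℝ) ≤ 2), mul_pow]
    norm_num
  unfold cov
  refine tsum_congr fun n => ?_
  have hc : 4 * (2*a)^2 * (lam/4) = 4 * a^2 * lam := by ring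
  rw [hc]
  congr 1
  -- the measure quotient
  set A₁ : Set (Fin n → E2) := {x | ∃ i,
    pl h β (x i) (corner a) > τ * ((∑ j, pl h β (x j) (corner a))
      - pl h β (x i) (corner a) + σ2)} with hA₁def
  have hA₁ : MeasurableSet A₁ := by
    rw [hA₁def, Set.setOf_exists]
    refine MeasurableSet.iUnion fun i => ?_
    refine (isOpen_lt ?_ ?_).measurableSet
    · exact continuous_const.mul
        (((continuous_finset_sum _ fun j _ => (hcontpl _).comp (continuous_apply j)).sub
          ((hcontpl _).comp (continuous_apply i))).add continuous_const)
    · exact (hcontpl _).comp (continuous_apply i)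
  have hΨ : Measurable fun (x : Fin n → E2) i => sqmap a (x i) :=
    measurable_pi_lambda _ fun i => (sqmap_measurable a).comp (measurable_pi_apply i)
  have hpre : (fun (x : Fin n → E2) i => sqmap a (x i)) ⁻¹' A₁
      = {x : Fin n → E2 | ∃ i,
          pl h β (x i) 0 > τ * ((∑ j, pl h β (x j) 0) - pl h β (x i) 0 + σ2)} := by
    ext x
    simp only [hA₁def, Set.mem_preimage, Set.mem_setOf_eq, key_pl]
  haveI := hfin a
  haveI := hfin (2*a)
  haveI : IsFiniteMeasure ((4:ℝ≥0∞) • volume.restrict (Sq 0 a)) := ⟨by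
    rw [Measure.smul_apply, smul_eq_mul]
    exact ENNReal.mul_lt_top (by norm_num) (measure_lt_top _ _)⟩
  have hPi : (Measure.pi fun _ : Fin n => volume.restrict (Sq 0 (2*a))).map
      (fun x i => sqmap a (x i))
      = (4:ℝ≥0∞) ^ n • Measure.pi fun _ : Fin n => volume.restrict (Sq 0 a) := by
    rw [my_pi_map_map (sqmap_measurable a) _ _ (map_sqmap a ha), my_pi_smul _ 4 (by norm_num),
      Fintype.card_fin]
  have hmeasure : (Measure.pi fun _ : Fin n => volume.restrict (Sq 0 (2*a)))
      {x : Fin n → E2 | ∃ i,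
        pl h β (x i) 0 > τ * ((∑ j, pl h β (x j) 0) - pl h β (x i) 0 + σ2)}
      = 4 ^ n * (Measure.pi fun _ : Fin n => volume.restrict (Sq 0 a)) A₁ := by
    rw [← hpre, ← Measure.map_apply hΨ hA₁, hPi, Measure.smul_apply, smul_eq_mul]
  rw [hmeasure, hV, mul_pow,
    ENNReal.mul_div_mul_left _ _ (by positivity) (ENNReal.pow_ne_top (by norm_num))]

end
end
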